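/- Let G be a group, H a subgroup of G with N_G(H) = H, and σ : G → G a group automorphism with σ ∘ σ = id. Then: (1) there exists a σ-equivariant real structure on G/H if and only if σ(H) = c·H·c⁻¹ for some c ∈ G; (2) there is at most one σ-equivariant real structure on G/H, and when it exists it is the map gH ↦ σ(g)·c·H for any c ∈ G with σ(H) = c·H·c⁻¹. -/

import Mathlib

/-- A `σ`-equivariant real structure on the homogeneous space `G/H`: a map
`μ : G/H → G/H` with `μ ∘ μ = id` and `μ(g·x) = σ(g)·μ(x)`. -/
def IsEquivRealStructure {G : Type*} [Group G] (σ : G →* G) (H : Subgroup G)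
    (μ : G ⧸ H → G ⧸ H) : Prop :=
  (∀ x, μ (μ x) = x) ∧ ∀ (g : G) (x : G ⧸ H), μ (g • x) = σ g • μ x

section Aux

variable {G : Type*} [Group G] {H : Subgroup G} {σ : G →* G}

lemma EqRS.mem_map_iff (hσ : ∀ g, σ (σ g) = g) (x : G) :
    x ∈ H.map σ ↔ σ x ∈ H := by
  constructor
  · rintro ⟨h, hh, rfl⟩; rwa [hσ]
  · intro hx; exact ⟨σ x, hx, hσ x⟩

lemma EqRS.mem_map_conj_iff (c x : G) :
    x ∈ H.map (MulAut.conj c).toMonoidHom ↔ c⁻¹ * x * c ∈ H := by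
  constructor
  · rintro ⟨h, hh, rfl⟩
    simpa [MulAut.conj_apply, mul_assoc] using hh
  · intro hx
    refine ⟨c⁻¹ * x * c, hx, ?_⟩
    simp [MulAut.conj_apply, mul_assoc]

/-- The key membership criterion from `H.map σ = H.map (conj c)`. -/
lemma EqRS.crit (hσ : ∀ g, σ (σ g) = g) {c : G}
    (hc : H.map σ = H.map (MulAut.conj c).toMonoidHom) (x : G) :
    σ x ∈ H ↔ c⁻¹ * x * c ∈ H := by
  rw [← EqRS.mem_map_iff hσ, hc, EqRS.mem_map_conj_iff]

/-- F1 : if `h ∈ H` then `c⁻¹ * σ h * c ∈ H`. -/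
lemma EqRS.F1 (hσ : ∀ g, σ (σ g) = g) {c : G}
    (hc : H.map σ = H.map (MulAut.conj c).toMonoidHom) {h : G} (hh : h ∈ H) :
    c⁻¹ * σ h * c ∈ H :=
  (EqRS.crit hσ hc (σ h)).mp (by rwa [hσ])

/-- F2 : if `h ∈ H` then `σ c * σ h * (σ c)⁻¹ ∈ H`. -/
lemma EqRS.F2 (hσ : ∀ g, σ (σ g) = g) {c : G}
    (hc : H.map σ = H.map (MulAut.conj c).toMonoidHom) {h : G} (hh : h ∈ H) :
    σ c * σ h * (σ c)⁻¹ ∈ H := by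
  have := (EqRS.crit hσ hc (c * h * c⁻¹)).mpr (by
    have e : c⁻¹ * (c * h * c⁻¹) * c = h := by group
    rwa [e])
  simpa [map_mul, map_inv] using this

/-- `σ c * c` normalizes `H`. -/
lemma EqRS.sigma_c_mul_c_mem_normalizer (hσ : ∀ g, σ (σ g) = g) {c : G}
    (hc : H.map σ = H.map (MulAut.conj c).toMonoidHom) :
    σ c * c ∈ Subgroup.normalizer (H : Set G) := by
  rw [Subgroup.mem_normalizer_iff]
  intro h
  constructor
  · intro hh
    have h1 : σ c * σ h * (σ c)⁻¹ ∈ H := EqRS.F2 hσ hc hh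
    have h2 := EqRS.F2 hσ hc h1
    have e : σ (σ c * σ h * (σ c)⁻¹) = c * h * c⁻¹ := by
      simp [map_mul, map_inv, hσ]
    rw [e] at h2
    have e' : σ c * (c * h * c⁻¹) * (σ c)⁻¹ = σ c * c * h * (σ c * c)⁻¹ := by group
    rwa [e'] at h2
  · intro hh
    have h1 : c⁻¹ * σ (σ c * c * h * (σ c * c)⁻¹) * c ∈ H := EqRS.F1 hσ hc hh
    have e : σ (σ c * c * h * (σ c * c)⁻¹) = c * σ c * σ h * (σ c)⁻¹ * c⁻¹ := by
      simp [map_mul, map_inv, hσ, mul_assoc]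
    rw [e] at h1
    have e1 : c⁻¹ * (c * σ c * σ h * (σ c)⁻¹ * c⁻¹) * c = σ c * σ h * (σ c)⁻¹ := by group
    rw [e1] at h1
    have h2 := EqRS.F1 hσ hc h1
    have e2 : σ (σ c * σ h * (σ c)⁻¹) = c * h * c⁻¹ := by simp [map_mul, map_inv, hσ]
    rw [e2] at h2
    have e3 : c⁻¹ * (c * h * c⁻¹) * c = h := by group
    rwa [e3] at h2

/-- Two conjugators give the same coset, when `H` is self-normalizing. -/
lemma EqRS.coset_eq (hσ : ∀ g, σ (σ g) = g) (hN : Subgroup.normalizer (H : Set G) = H)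
    {c c' : G} (hc : H.map σ = H.map (MulAut.conj c).toMonoidHom)
    (hc' : H.map σ = H.map (MulAut.conj c').toMonoidHom) :
    (c : G ⧸ H) = (c' : G ⧸ H) := by
  rw [QuotientGroup.eq, ← hN, Subgroup.mem_normalizer_iff]
  intro h
  have key : ∀ x, c⁻¹ * x * c ∈ H ↔ c'⁻¹ * x * c' ∈ H := fun x => by
    rw [← EqRS.crit hσ hc x, EqRS.crit hσ hc' x]
  constructor
  · intro hh
    have := (key (c' * h * c'⁻¹)).mpr (by
      have e : c'⁻¹ * (c' * h * c'⁻¹) * c' = h := by group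
      rwa [e])
    have e : c⁻¹ * (c' * h * c'⁻¹) * c = c⁻¹ * c' * h * (c⁻¹ * c')⁻¹ := by group
    rwa [e] at this
  · intro hh
    have e : c⁻¹ * c' * h * (c⁻¹ * c')⁻¹ = c⁻¹ * (c' * h * c'⁻¹) * c := by group
    rw [e] at hh
    have := (key (c' * h * c'⁻¹)).mp hh
    have e2 : c'⁻¹ * (c' * h * c'⁻¹) * c' = h := by group
    rwa [e2] at this

/-- A real structure is determined by its value at the trivial coset. -/
lemma EqRS.apply_mk {μ : G ⧸ H → G ⧸ H} (hμ : IsEquivRealStructure σ H μ) {c : G}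
    (h1 : μ ((1 : G) : G ⧸ H) = (c : G ⧸ H)) (g : G) :
    μ (g : G ⧸ H) = ((σ g * c : G) : G ⧸ H) := by
  have : (g : G ⧸ H) = g • ((1 : G) : G ⧸ H) := by
    rw [MulAction.Quotient.smul_coe, smul_eq_mul, mul_one]
  rw [this, hμ.2, h1, MulAction.Quotient.smul_coe, smul_eq_mul]

/-- From a real structure with `μ 1 = ↑c`, deduce `H.map σ = H.map (conj c)`. -/
lemma EqRS.conj_of_structure (hσ : ∀ g, σ (σ g) = g)
    {μ : G ⧸ H → G ⧸ H} (hμ : IsEquivRealStructure σ H μ) {c : G}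
    (h1 : μ ((1 : G) : G ⧸ H) = (c : G ⧸ H)) :
    H.map σ = H.map (MulAut.conj c).toMonoidHom := by
  have hmk := EqRS.apply_mk hμ h1
  -- involution gives `σ c * c ∈ H`
  have hcc : σ c * c ∈ H := by
    have hi := hμ.1 ((1 : G) : G ⧸ H)
    rw [h1, hmk c] at hi
    have := QuotientGroup.eq.mp hi
    simpa using H.inv_mem this
  -- forward inclusion, elementwise
  have fwd : ∀ e : G, σ e ∈ H → c⁻¹ * e * c ∈ H := by
    intro e he
    have heq : ((σ e : G) : G ⧸ H) = ((1 : G) : G ⧸ H) := by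
      rw [QuotientGroup.eq]
      simpa using H.inv_mem he
    have := congrArg μ heq
    rw [hmk, hmk] at this
    have h2 := QuotientGroup.eq.mp this
    have e2 : (σ (σ e) * c)⁻¹ * (σ 1 * c) = c⁻¹ * e⁻¹ * c := by
      rw [hσ, map_one]; group
    rw [e2] at h2
    have := H.inv_mem h2
    simpa [mul_assoc] using this
  ext x
  rw [EqRS.mem_map_iff hσ, EqRS.mem_map_conj_iff]
  constructor
  · exact fwd x
  · intro hx
    have hk : c⁻¹ * σ (c⁻¹ * x * c) * c ∈ H := fwd _ (by rwa [hσ])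
    have e : σ x = (σ c * c) * (c⁻¹ * σ (c⁻¹ * x * c) * c) * (σ c * c)⁻¹ := by
      rw [map_mul, map_mul, map_inv]
      group
    rw [e]
    exact H.mul_mem (H.mul_mem hcc hk) (H.inv_mem hcc)

end Aux

/-- **Corollary 2.9.** Suppose `N_G(H) = H`. Then (1) `G/H` admits a `σ`-equivariant
real structure iff `σ(H) = c·H·c⁻¹` for some `c ∈ G`; (2) there is at most one
`σ`-equivariant real structure on `G/H`, and when it exists it is the map
`gH ↦ σ(g)·c·H` for any `c` with `σ(H) = c·H·c⁻¹`. -/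
theorem equivRealStructure_of_selfNormalizing {G : Type*} [Group G] (H : Subgroup G)
    (σ : G →* G) (hσ : ∀ g, σ (σ g) = g) (hN : Subgroup.normalizer (H : Set G) = H) :
    ((∃ μ : G ⧸ H → G ⧸ H, IsEquivRealStructure σ H μ) ↔
      ∃ c : G, H.map σ = H.map (MulAut.conj c).toMonoidHom) ∧
    (∀ μ μ' : G ⧸ H → G ⧸ H,
      IsEquivRealStructure σ H μ → IsEquivRealStructure σ H μ' → μ = μ') ∧
    (∀ c : G, H.map σ = H.map (MulAut.conj c).toMonoidHom →
      ∀ μ : G ⧸ H → G ⧸ H, IsEquivRealStructure σ H μ →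
        ∀ g : G, μ (g : G ⧸ H) = ((σ g * c : G) : G ⧸ H)) := by
  refine ⟨⟨?_, ?_⟩, ?_, ?_⟩
  · rintro ⟨μ, hμ⟩
    obtain ⟨c, hc⟩ := QuotientGroup.mk_surjective (μ ((1 : G) : G ⧸ H))
    exact ⟨c, EqRS.conj_of_structure hσ hμ hc.symm⟩
  · rintro ⟨c, hc⟩
    have hcc : σ c * c ∈ H := by rw [← hN]; exact EqRS.sigma_c_mul_c_mem_normalizer hσ hc
    refine ⟨Quotient.map' (fun g => σ g * c) ?_, ?_, ?_⟩
    · intro a b hab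
      rw [QuotientGroup.leftRel_apply] at hab ⊢
      have e : (σ a * c)⁻¹ * (σ b * c) = c⁻¹ * σ (a⁻¹ * b) * c := by
        rw [map_mul, map_inv]; group
      rw [e]
      exact EqRS.F1 hσ hc hab
    · intro x
      induction x using QuotientGroup.induction_on with
      | H g =>
        show ((σ (σ g * c) * c : G) : G ⧸ H) = (g : G ⧸ H)
        rw [QuotientGroup.eq]
        have e : (σ (σ g * c) * c)⁻¹ * g = (σ c * c)⁻¹ * (g⁻¹ * g) := by
          rw [map_mul, hσ]; group
        rw [e, inv_mul_cancel, mul_one]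
        exact H.inv_mem hcc
    · intro g x
      induction x using QuotientGroup.induction_on with
      | H a =>
        show ((σ (g * a) * c : G) : G ⧸ H) = σ g • ((σ a * c : G) : G ⧸ H)
        rw [MulAction.Quotient.smul_coe, smul_eq_mul, map_mul, mul_assoc]
  · intro μ μ' hμ hμ'
    obtain ⟨c, hc⟩ := QuotientGroup.mk_surjective (μ ((1 : G) : G ⧸ H))
    obtain ⟨c', hc'⟩ := QuotientGroup.mk_surjective (μ' ((1 : G) : G ⧸ H))
    have hcos := EqRS.coset_eq hσ hN (EqRS.conj_of_structure hσ hμ hc.symm)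
      (EqRS.conj_of_structure hσ hμ' hc'.symm)
    funext x
    induction x using QuotientGroup.induction_on with
    | H g =>
      rw [EqRS.apply_mk hμ hc.symm, EqRS.apply_mk hμ' hc'.symm]
      show σ g • (c : G ⧸ H) = σ g • (c' : G ⧸ H)
      rw [hcos]
  · intro c hc μ hμ g
    obtain ⟨c₀, hc₀⟩ := QuotientGroup.mk_surjective (μ ((1 : G) : G ⧸ H))
    have hcos := EqRS.coset_eq hσ hN (EqRS.conj_of_structure hσ hμ hc₀.symm) hc
    rw [EqRS.apply_mk hμ hc₀.symm]
    show σ g • (c₀ : G ⧸ H) = σ g • (c : G ⧸ H)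
    rw [hcos]
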